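/- Let J be a strongly stable monomial ideal in A[x₀,…,xₙ] over a commutative noetherian ring A and F_J a J-marked set. Then for every degree s, the degree-s component of the polynomial ring decomposes as a direct sum of A-modules: A[x]_s = ⟨F_J^{(s)}⟩ ⊕ ⟨N(J)_s⟩. -/

import Mathlib

open MvPolynomial

noncomputable section

/-- Exponent vectors of monomials in the variables `x₀, …, xₙ`. -/
abbrev Mon (n : ℕ) : Type := Fin (n + 1) →₀ ℕ

namespace MarkedFamilies

variable {n : ℕ}

/-- The total degree of a monomial given by its exponent vector. -/
def mdeg (α : Mon n) : ℕ := α.sum fun _ e => e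

/-- A monomial ideal, identified with its (upward closed) set of monomials. -/
def IsMonomialIdeal (J : Set (Mon n)) : Prop := ∀ α ∈ J, ∀ δ : Mon n, α + δ ∈ J

/-- A strongly stable monomial ideal: a monomial ideal such that for every monomial
`x^α ∈ J`, every variable `x_j` dividing `x^α` and every `i > j`, `(x_i/x_j)·x^α ∈ J`. -/
def IsStronglyStable (J : Set (Mon n)) : Prop :=
  IsMonomialIdeal J ∧
    ∀ α ∈ J, ∀ j : Fin (n + 1), α j ≠ 0 → ∀ i : Fin (n + 1), j < i →
      α - Finsupp.single j 1 + Finsupp.single i 1 ∈ J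

/-- The minimal monomial generators `B_J` of a monomial ideal `J`. -/
def minGens (J : Set (Mon n)) : Set (Mon n) :=
  {α | α ∈ J ∧ ∀ j : Fin (n + 1), α j ≠ 0 → α - Finsupp.single j 1 ∉ J}

/-- `min x^γ ≥ max x^δ`: every variable dividing `x^γ` is at least every variable
dividing `x^δ` (vacuously true when either monomial is `1`). -/
def minGeMax (γ δ : Mon n) : Prop := ∀ i ∈ γ.support, ∀ j ∈ δ.support, j ≤ i

/-- Lexicographic order induced by `x₀ < ⋯ < xₙ`: `a <ₗₑₓ b` iff at the largest
index where they differ, `a` has the smaller exponent. -/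
def lexLt (a b : Mon n) : Prop :=
  ∃ i : Fin (n + 1), a i < b i ∧ ∀ j : Fin (n + 1), i < j → a j = b j

/-- A saturated strongly stable ideal: strongly stable and no minimal generator is
divisible by `x₀`. -/
def IsSaturatedSS (J : Set (Mon n)) : Prop :=
  IsStronglyStable J ∧ ∀ α ∈ minGens J, α 0 = 0

/-- The truncation `J_{≥ t}`: the (monomial) ideal generated by the monomials of `J`
of degree at least `t`. -/
def truncSet (J : Set (Mon n)) (t : ℕ) : Set (Mon n) := {α | α ∈ J ∧ t ≤ mdeg α}

section Ring

variable (A : Type*) [CommRing A]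

/-- `⟨N(J)⟩`: the `A`-span of the monomials not in `J`. -/
def nSpan (J : Set (Mon n)) : Submodule A (MvPolynomial (Fin (n + 1)) A) :=
  Submodule.span A {p | ∃ β : Mon n, β ∉ J ∧ p = monomial β (1 : A)}

/-- `⟨N(J)_s⟩`: the `A`-span of the monomials of degree `s` not in `J`. -/
def nSpanDeg (J : Set (Mon n)) (s : ℕ) : Submodule A (MvPolynomial (Fin (n + 1)) A) :=
  Submodule.span A {p | ∃ β : Mon n, β ∉ J ∧ mdeg β = s ∧ p = monomial β (1 : A)}

/-- `I_s`: the degree-`s` homogeneous component of an ideal, as an `A`-submodule. -/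
def idealDeg (I : Ideal (MvPolynomial (Fin (n + 1)) A)) (s : ℕ) :
    Submodule A (MvPolynomial (Fin (n + 1)) A) :=
  Submodule.restrictScalars A I ⊓ homogeneousSubmodule (Fin (n + 1)) A s

/-- `I_{≥ s}`: the ideal `⊕_{t ≥ s} I_t`, i.e. the ideal generated by the homogeneous
elements of `I` of degree at least `s`. -/
def idealGeq (I : Ideal (MvPolynomial (Fin (n + 1)) A)) (s : ℕ) :
    Ideal (MvPolynomial (Fin (n + 1)) A) :=
  Ideal.span {f | f ∈ I ∧ ∃ t : ℕ, s ≤ t ∧ f.IsHomogeneous t}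

/-- A homogeneous ideal of the polynomial ring. -/
def IsHomogIdeal (I : Ideal (MvPolynomial (Fin (n + 1)) A)) : Prop :=
  ∀ f ∈ I, ∀ s : ℕ, homogeneousComponent s f ∈ I

variable {A}

/-- A `J`-marked set: a family assigning to each minimal generator `x^α ∈ B_J` a
polynomial `f_α = x^α − Σ_{x^β ∈ N(J)_{|α|}} c_{αβ} x^β`. -/
def IsMarkedSet (J : Set (Mon n)) (F : Mon n → MvPolynomial (Fin (n + 1)) A) : Prop :=
  ∀ α ∈ minGens J, (F α).coeff α = 1 ∧
    ∀ β ∈ (F α).support, β ≠ α → β ∉ J ∧ mdeg β = mdeg α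

/-- The ideal generated by a marked set. -/
def markedIdeal (J : Set (Mon n)) (F : Mon n → MvPolynomial (Fin (n + 1)) A) :
    Ideal (MvPolynomial (Fin (n + 1)) A) :=
  Ideal.span (F '' minGens J)

/-- A `J`-marked basis: a `J`-marked set `F` with `A[x] = (F) ⊕ ⟨N(J)⟩` as `A`-modules. -/
def IsMarkedBasis (J : Set (Mon n)) (F : Mon n → MvPolynomial (Fin (n + 1)) A) : Prop :=
  IsMarkedSet J F ∧
    IsCompl (Submodule.restrictScalars A (markedIdeal J F)) (nSpan A J)

/-- `F_J^{(s)} = { x^δ f_α : deg(x^δ f_α) = s, min x^α ≥ max x^δ }`. -/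
def FSet (J : Set (Mon n)) (F : Mon n → MvPolynomial (Fin (n + 1)) A) (s : ℕ) :
    Set (MvPolynomial (Fin (n + 1)) A) :=
  {p | ∃ α δ : Mon n, α ∈ minGens J ∧ mdeg α + mdeg δ = s ∧ minGeMax α δ ∧
        p = monomial δ (1 : A) * F α}

/-- `F̂_J^{(s)} = { x^δ f_α : deg(x^δ f_α) = s, min x^α < max x^δ }`. -/
def FHatSet (J : Set (Mon n)) (F : Mon n → MvPolynomial (Fin (n + 1)) A) (s : ℕ) :
    Set (MvPolynomial (Fin (n + 1)) A) :=
  {p | ∃ α δ : Mon n, α ∈ minGens J ∧ mdeg α + mdeg δ = s ∧ ¬ minGeMax α δ ∧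
        p = monomial δ (1 : A) * F α}

/-- `SF_J^{(s)} = { x^δ f_β − x^γ f_α : x^δ f_β ∈ F̂_J^{(s)}, x^γ f_α ∈ F_J^{(s)},
x^δ x^β = x^γ x^α }`. -/
def SFSet (J : Set (Mon n)) (F : Mon n → MvPolynomial (Fin (n + 1)) A) (s : ℕ) :
    Set (MvPolynomial (Fin (n + 1)) A) :=
  {p | ∃ α γ β δ : Mon n, α ∈ minGens J ∧ β ∈ minGens J ∧
      mdeg β + mdeg δ = s ∧ ¬ minGeMax β δ ∧
      mdeg α + mdeg γ = s ∧ minGeMax α γ ∧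
      δ + β = γ + α ∧ p = monomial δ (1 : A) * F β - monomial γ (1 : A) * F α}

/-- A `(J_s)`-marked set: one marked polynomial `f̃_γ = x^γ − Σ_{x^δ ∈ N(J)_s} d_{γδ} x^δ`
for each monomial `x^γ` of degree `s` in `J`. -/
def IsTruncMarkedSet (J : Set (Mon n)) (s : ℕ)
    (f : Mon n → MvPolynomial (Fin (n + 1)) A) : Prop :=
  ∀ γ : Mon n, γ ∈ J → mdeg γ = s →
    (f γ).coeff γ = 1 ∧ ∀ β ∈ (f γ).support, β ≠ γ → β ∉ J ∧ mdeg β = s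

end Ring

/-- Index set for the generic coefficients `C_{αβ}` (`x^α ∈ B_J`, `x^β ∈ N(J)_{|α|}`). -/
abbrev CIdx (J : Set (Mon n)) : Type :=
  {p : Mon n × Mon n // p.1 ∈ minGens J ∧ p.2 ∉ J ∧ mdeg p.2 = mdeg p.1}

/-- The coefficient ring `ℤ[C]`. -/
abbrev ZC (J : Set (Mon n)) : Type := MvPolynomial (CIdx J) ℤ

/-- The generic `J`-marked set `𝓕_J = { x^α − Σ_{x^β ∈ N(J)_{|α|}} C_{αβ} x^β }`
in `ℤ[C][x]`, characterized through its coefficients. -/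
def IsGenericMarkedSet (J : Set (Mon n))
    (𝓕 : Mon n → MvPolynomial (Fin (n + 1)) (ZC J)) : Prop :=
  ∀ α : Mon n, ∀ hα : α ∈ minGens J,
    (𝓕 α).coeff α = 1 ∧
    (∀ γ : Mon n, ∀ hγ : γ ∉ J ∧ mdeg γ = mdeg α,
      (𝓕 α).coeff γ = - MvPolynomial.X ⟨(α, γ), hα, hγ.1, hγ.2⟩) ∧
    (∀ γ : Mon n, γ ≠ α → ¬(γ ∉ J ∧ mdeg γ = mdeg α) → (𝓕 α).coeff γ = 0)

/-- The ideal `𝔦_J ⊆ ℤ[C]` generated by the `x`-coefficients of all polynomials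
in `(𝓕_J) ∩ ⟨N(J)⟩`. -/
def markedCoeffIdeal (J : Set (Mon n))
    (𝓕 : Mon n → MvPolynomial (Fin (n + 1)) (ZC J)) : Ideal (ZC J) :=
  Ideal.span {c : ZC J | ∃ p : MvPolynomial (Fin (n + 1)) (ZC J),
    p ∈ markedIdeal J 𝓕 ∧ p ∈ nSpan (ZC J) J ∧ ∃ γ : Mon n, p.coeff γ = c}

/-- The evaluation homomorphism `φ_{F_J} : ℤ[C] → A`, `C_{αβ} ↦ c_{αβ}`, associated to a
`J`-marked set `F` with `f_α = x^α − Σ c_{αβ} x^β` (so `c_{αβ} = −(F α).coeff β`). -/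
noncomputable def evalHom (J : Set (Mon n)) {A : Type*} [CommRing A]
    (F : Mon n → MvPolynomial (Fin (n + 1)) A) : ZC J →+* A :=
  MvPolynomial.eval₂Hom (Int.castRingHom A) fun p => -((F p.val.1).coeff p.val.2)

/-- `x^γ` is the `σ`-leading monomial of `g` (with nonzero leading coefficient). -/
def IsLeadingMon {A : Type*} [CommRing A] (σlt : Mon n → Mon n → Prop)
    (g : MvPolynomial (Fin (n + 1)) A) (γ : Mon n) : Prop :=
  g.coeff γ ≠ 0 ∧ ∀ δ ∈ g.support, δ ≠ γ → σlt δ γ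

/-- `LC(I, x^γ)`: the set of leading coefficients at `x^γ` of elements of `I`,
together with `0`. -/
def LCset {A : Type*} [CommRing A] (σlt : Mon n → Mon n → Prop)
    (I : Ideal (MvPolynomial (Fin (n + 1)) A)) (γ : Mon n) : Set A :=
  {a | ∃ g ∈ I, IsLeadingMon σlt g γ ∧ g.coeff γ = a} ∪ {0}

/-- A monic ideal with respect to the term ordering `σ`. -/
def IsMonicIdeal {A : Type*} [CommRing A] (σlt : Mon n → Mon n → Prop)
    (I : Ideal (MvPolynomial (Fin (n + 1)) A)) : Prop :=
  ∀ γ : Mon n, LCset σlt I γ = {0} ∨ LCset σlt I γ = Set.univ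

/-- The set of `σ`-leading monomials of elements of `I` (i.e. `in_σ(I)`,
identified with its set of monomials). -/
def leadingMons {A : Type*} [CommRing A] (σlt : Mon n → Mon n → Prop)
    (I : Ideal (MvPolynomial (Fin (n + 1)) A)) : Set (Mon n) :=
  {γ | ∃ g ∈ I, IsLeadingMon σlt g γ}

end MarkedFamilies
end
noncomputable section
namespace MarkedFamilies

variable {n : ℕ}

section Aux

lemma mdeg_eq_degree (α : Mon n) : mdeg α = α.degree := rfl

lemma mdeg_add (a b : Mon n) : mdeg (a + b) = mdeg a + mdeg b := by
  simp [mdeg_eq_degree, Finsupp.degree_eq_weight_one, map_add]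

lemma le_mdeg (α : Mon n) (i : Fin (n+1)) : α i ≤ mdeg α := by
  rw [mdeg_eq_degree]; exact Finsupp.le_degree i α

lemma mdeg_single (i : Fin (n+1)) : mdeg (Finsupp.single i 1) = 1 := by
  rw [mdeg]; exact Finsupp.sum_single_index rfl

lemma lexLt_trichotomy (a b : Mon n) : lexLt a b ∨ a = b ∨ lexLt b a := by
  by_cases h : a = b
  · exact Or.inr (Or.inl h)
  have hne : (Finset.univ.filter fun i : Fin (n+1) => a i ≠ b i).Nonempty := by
    by_contra hempty
    rw [Finset.not_nonempty_iff_eq_empty, Finset.filter_eq_empty_iff] at hempty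
    exact h (Finsupp.ext fun i => not_not.mp (hempty (Finset.mem_univ i)))
  set T := Finset.univ.filter fun i : Fin (n+1) => a i ≠ b i with hT
  set i := T.max' hne with hidef
  have hiT : i ∈ T := T.max'_mem hne
  have hab : a i ≠ b i := (Finset.mem_filter.mp hiT).2
  have hup : ∀ j, i < j → a j = b j := by
    intro j hj
    by_contra hc
    have : j ∈ T := Finset.mem_filter.mpr ⟨Finset.mem_univ _, hc⟩
    exact absurd (Finset.le_max' T j this) (not_le.mpr hj)
  rcases lt_or_gt_of_ne hab with hlt | hgt
  · exact Or.inl ⟨i, hlt, hup⟩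
  · exact Or.inr (Or.inr ⟨i, hgt, fun j hj => (hup j hj).symm⟩)

/-- base-(s+1) numeric measure -/
def meas (s : ℕ) (δ : Mon n) : ℕ := ∑ i : Fin (n+1), δ i * (s+1)^(i : ℕ)

lemma sum_range_lt_pow {B : ℕ} (hB : 1 ≤ B) (g : ℕ → ℕ) (hg : ∀ j, g j ≤ B - 1) (k : ℕ) :
    ∑ j ∈ Finset.range k, g j * B ^ j < B ^ k := by
  induction k with
  | zero => simp
  | succ k ih =>
      rw [Finset.sum_range_succ, pow_succ]
      have h1 : g k * B ^ k ≤ (B - 1) * B ^ k := Nat.mul_le_mul_right _ (hg k)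
      have h2 : B ^ k + (B - 1) * B ^ k = B ^ k * B := by
        have : 1 + (B - 1) = B := by omega
        calc B ^ k + (B - 1) * B ^ k = (1 + (B - 1)) * B ^ k := by ring
        _ = B ^ k * B := by rw [this]; ring
      omega

/-- transfer `meas` to a sum over `Finset.range (n+1)` -/
lemma meas_eq_range (s : ℕ) (δ : Mon n) :
    meas s δ = ∑ j ∈ Finset.range (n+1), (if h : j < n + 1 then δ ⟨j, h⟩ else 0) * (s+1)^j := by
  rw [meas, Finset.sum_range fun j => (if h : j < n + 1 then δ ⟨j, h⟩ else 0) * (s+1)^(j:ℕ)]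
  refine Finset.sum_congr rfl fun i _ => ?_
  simp [i.isLt]

lemma sum_lt_sum_of_lex {B : ℕ} (hB : 1 ≤ B) (f g : ℕ → ℕ) {i N : ℕ} (hiN : i < N)
    (hfi : f i < g i) (hup : ∀ j, i < j → f j = g j) (hb : ∀ j, f j ≤ B - 1) :
    ∑ j ∈ Finset.range N, f j * B ^ j < ∑ j ∈ Finset.range N, g j * B ^ j := by
  have hin : i + 1 ≤ N := hiN
  rw [← Finset.sum_range_add_sum_Ico (fun j => f j * B ^ j) hin,
      ← Finset.sum_range_add_sum_Ico (fun j => g j * B ^ j) hin]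
  have htail : ∑ j ∈ Finset.Ico (i+1) N, f j * B ^ j
      = ∑ j ∈ Finset.Ico (i+1) N, g j * B ^ j := by
    refine Finset.sum_congr rfl fun j hj => ?_
    obtain ⟨hj1, _⟩ := Finset.mem_Ico.mp hj
    rw [hup j (by omega)]
  rw [htail]
  have hhead : ∑ j ∈ Finset.range (i+1), f j * B ^ j < ∑ j ∈ Finset.range (i+1), g j * B ^ j := by
    rw [Finset.sum_range_succ, Finset.sum_range_succ]
    have h1 : ∑ j ∈ Finset.range i, f j * B ^ j < B ^ i := sum_range_lt_pow hB f hb i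
    have h2 : f i * B ^ i + B ^ i ≤ g i * B ^ i := by
      calc f i * B ^ i + B ^ i = (f i + 1) * B ^ i := by ring
      _ ≤ g i * B ^ i := Nat.mul_le_mul_right _ (by omega)
    have h3 : (0:ℕ) ≤ ∑ j ∈ Finset.range i, g j * B ^ j := Nat.zero_le _
    omega
  omega

lemma meas_lt {s : ℕ} {η δ : Mon n} (h : lexLt η δ) (hb : ∀ j, η j ≤ s) :
    meas s η < meas s δ := by
  obtain ⟨i, hi, hup⟩ := h
  rw [meas_eq_range, meas_eq_range]
  refine sum_lt_sum_of_lex (by omega)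
    (fun j => if h : j < n + 1 then η ⟨j, h⟩ else 0)
    (fun j => if h : j < n + 1 then δ ⟨j, h⟩ else 0) (i := (i:ℕ)) i.isLt ?_ ?_ ?_
  · simpa [i.isLt] using hi
  · intro j hj
    by_cases hjn : j < n + 1
    · have : i < (⟨j, hjn⟩ : Fin (n+1)) := by
        rw [Fin.lt_def]; exact hj
      simp [hjn, hup _ this]
    · simp [hjn]
  · intro j
    by_cases hjn : j < n + 1
    · have := hb ⟨j, hjn⟩; simp [hjn]; omega
    · simp [hjn]

lemma mem_of_le {J : Set (Mon n)} (hJ : IsMonomialIdeal J) {a b : Mon n}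
    (ha : a ∈ J) (hab : ∀ i, a i ≤ b i) : b ∈ J := by
  have hle : a ≤ b := Finsupp.le_def.mpr hab
  have := hJ a ha (b - a)
  rwa [add_tsub_cancel_of_le hle] at this

lemma ptwise {δ β η α' : Mon n} (h : δ + β = η + α') (hmm : minGeMax α' η)
    {i : Fin (n+1)} (hi : δ i < η i) (hup : ∀ j, i < j → δ j = η j) :
    (∀ j, α' j ≤ β j) ∧ α' i < β i := by
  have hco : ∀ j, δ j + β j = η j + α' j := by
    intro j
    have := congrArg (fun f : Mon n => f j) h
    simpa [Finsupp.add_apply] using this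
  have hiη : i ∈ η.support := Finsupp.mem_support_iff.mpr (by omega)
  have hlow : ∀ j, j < i → α' j = 0 := by
    intro j hj
    by_contra hc
    have : j ∈ α'.support := Finsupp.mem_support_iff.mpr hc
    exact absurd (hmm j this i hiη) (not_le.mpr hj)
  constructor
  · intro j
    rcases lt_trichotomy j i with hj | hj | hj
    · rw [hlow j hj]; omega
    · subst hj; have := hco j; omega
    · have := hup j hj; have := hco j; omega
  · have := hco i; omega

lemma lexLt_of_decomp {J : Set (Mon n)} (hJ : IsMonomialIdeal J) {δ β η α' : Mon n}
    (h : δ + β = η + α') (hmm : minGeMax α' η) (hα' : α' ∈ J) (hβ : β ∉ J) :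
    lexLt η δ := by
  rcases lexLt_trichotomy η δ with h1 | h1 | h1
  · exact h1
  · subst h1
    have : β = α' := by
      have := add_left_cancel h
      exact this
    exact absurd (this ▸ hα') hβ
  · obtain ⟨i, hi, hup⟩ := h1
    obtain ⟨hle, _⟩ := ptwise h hmm hi hup
    exact absurd (mem_of_le hJ hα' hle) hβ

lemma minGens_subset {J : Set (Mon n)} : minGens J ⊆ J := fun _ h => h.1

lemma not_lexLt_of_canon {J : Set (Mon n)} (hJ : IsMonomialIdeal J) {δ α δ' α' : Mon n}
    (h : δ + α = δ' + α') (hm' : minGeMax α' δ') (hα'J : α' ∈ J) (hα : α ∈ minGens J) :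
    ¬ lexLt δ δ' := by
  rintro ⟨i, hi, hup⟩
  obtain ⟨hle, hlt⟩ := ptwise h hm' hi hup
  have hαi : α i ≠ 0 := by omega
  apply hα.2 i hαi
  apply mem_of_le hJ hα'J
  intro j
  rw [Finsupp.tsub_apply, Finsupp.single_apply]
  rcases eq_or_ne i j with rfl | hij
  · simp; omega
  · simp [hij]; exact hle j

lemma decomp_unique {J : Set (Mon n)} (hJ : IsMonomialIdeal J) {α δ α' δ' : Mon n}
    (hα : α ∈ minGens J) (hα' : α' ∈ minGens J) (h : δ + α = δ' + α')
    (hm : minGeMax α δ) (hm' : minGeMax α' δ') : α = α' ∧ δ = δ' := by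
  rcases lexLt_trichotomy δ δ' with h1 | h1 | h1
  · exact absurd h1 (not_lexLt_of_canon hJ h hm' (minGens_subset hα') hα)
  · subst h1
    have : α = α' := add_left_cancel h
    exact ⟨this, rfl⟩
  · exact absurd h1 (not_lexLt_of_canon hJ h.symm hm (minGens_subset hα) hα')

lemma exists_decomp {J : Set (Mon n)} (hJ : IsStronglyStable J) :
    ∀ γ ∈ J, ∃ α δ : Mon n, α ∈ minGens J ∧ γ = α + δ ∧ minGeMax α δ := by
  suffices H : ∀ d : ℕ, ∀ γ ∈ J, mdeg γ = d → ∃ α δ : Mon n, α ∈ minGens J ∧ γ = α + δ ∧ minGeMax α δ by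
    intro γ hγ; exact H (mdeg γ) γ hγ rfl
  intro d
  induction d using Nat.strong_induction_on with
  | _ d ih =>
  intro γ hγ hd
  by_cases hmin : γ ∈ minGens J
  · refine ⟨γ, 0, hmin, (add_zero γ).symm, ?_⟩
    intro i hi j hj
    simp at hj
  · rw [minGens, Set.mem_setOf_eq] at hmin
    push_neg at hmin
    obtain ⟨j, hj0, hjJ⟩ := hmin hγ
    have hjsupp : j ∈ γ.support := Finsupp.mem_support_iff.mpr hj0
    have hsne : γ.support.Nonempty := ⟨j, hjsupp⟩
    set m := γ.support.min' hsne with hm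
    have hmsupp : m ∈ γ.support := γ.support.min'_mem hsne
    have hm0 : γ m ≠ 0 := Finsupp.mem_support_iff.mp hmsupp
    have hstep : γ - Finsupp.single m 1 ∈ J := by
      rcases eq_or_ne j m with rfl | hjm
      · exact hjJ
      · have hmj : m < j := lt_of_le_of_ne (γ.support.min'_le j hjsupp) (Ne.symm hjm)
        have hdiv : (γ - Finsupp.single j 1 : Mon n) m ≠ 0 := by
          rw [Finsupp.tsub_apply, Finsupp.single_apply, if_neg hjm]
          omega
        have := hJ.2 (γ - Finsupp.single j 1) hjJ m hdiv j hmj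
        have heq : γ - Finsupp.single j 1 - Finsupp.single m 1 + Finsupp.single j 1
            = γ - Finsupp.single m 1 := by
          ext k
          simp only [Finsupp.add_apply, Finsupp.tsub_apply, Finsupp.single_apply]
          rcases eq_or_ne j k with rfl | hjk
          · rw [if_pos rfl, if_neg (show ¬ m = j from fun h => hjm h.symm)]
            have : γ j ≠ 0 := hj0
            omega
          · rw [if_neg hjk]
            rcases eq_or_ne m k with rfl | hmk
            · rw [if_pos rfl]; omega
            · rw [if_neg hmk]; omega
        rwa [heq] at this
    have hle : Finsupp.single m 1 ≤ γ := Finsupp.single_le_iff.mpr (by omega)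
    have hmdeg : mdeg (γ - Finsupp.single m 1) + 1 = d := by
      have : (γ - Finsupp.single m 1) + Finsupp.single m 1 = γ := tsub_add_cancel_of_le hle
      calc mdeg (γ - Finsupp.single m 1) + 1
          = mdeg (γ - Finsupp.single m 1) + mdeg (Finsupp.single m 1) := by rw [mdeg_single]
        _ = mdeg ((γ - Finsupp.single m 1) + Finsupp.single m 1) := (mdeg_add _ _).symm
        _ = d := by rw [this, hd]
    obtain ⟨α, δ', hα, hdec, hmm⟩ := ih (mdeg (γ - Finsupp.single m 1)) (by omega)
      (γ - Finsupp.single m 1) hstep rfl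
    refine ⟨α, δ' + Finsupp.single m 1, hα, ?_, ?_⟩
    · calc γ = (γ - Finsupp.single m 1) + Finsupp.single m 1 := (tsub_add_cancel_of_le hle).symm
        _ = α + δ' + Finsupp.single m 1 := by rw [← hdec]
        _ = α + (δ' + Finsupp.single m 1) := by rw [add_assoc]
    · intro i hi k hk
      have hk' := Finsupp.support_add hk
      rcases Finset.mem_union.mp hk' with hkδ | hkm
      · exact hmm i hi k hkδ
      · have : k = m := Finset.mem_singleton.mp (Finsupp.support_single_subset hkm)
        subst this
        have hiγ : i ∈ γ.support := by
          have hαle : α i ≤ γ i := by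
            have : α i ≤ (γ - Finsupp.single m 1 : Mon n) i := by
              rw [hdec, Finsupp.add_apply]; omega
            rw [Finsupp.tsub_apply] at this
            omega
          have : α i ≠ 0 := Finsupp.mem_support_iff.mp hi
          exact Finsupp.mem_support_iff.mpr (by omega)
        exact γ.support.min'_le i hiγ

end Aux

section Ring2

variable {A : Type*} [CommRing A]

lemma monomial_mul_eq_sum (δ : Mon n) (f : MvPolynomial (Fin (n+1)) A) :
    monomial δ (1:A) * f = ∑ β ∈ f.support, monomial (δ + β) (f.coeff β) := by
  conv_lhs => rw [f.as_sum]
  rw [Finset.mul_sum]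
  exact Finset.sum_congr rfl fun β _ => by rw [monomial_mul, one_mul]

lemma coeff_monomial_mul_eq (γ δ : Mon n) (f : MvPolynomial (Fin (n+1)) A) :
    coeff γ (monomial δ (1:A) * f) = ∑ β ∈ f.support, if δ + β = γ then f.coeff β else 0 := by
  rw [monomial_mul_eq_sum, coeff_sum]
  exact Finset.sum_congr rfl fun β _ => by rw [coeff_monomial]

lemma isHomogeneous_markedSet {J : Set (Mon n)} {F : Mon n → MvPolynomial (Fin (n+1)) A}
    (hF : IsMarkedSet J F) {α : Mon n} (hα : α ∈ minGens J) :
    (F α).IsHomogeneous (mdeg α) := by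
  intro d hd
  change (Finsupp.weight (fun _ => 1)) d = mdeg α
  rw [← Finsupp.degree_eq_weight_one, ← mdeg_eq_degree]
  rcases eq_or_ne d α with rfl | hne
  · rfl
  · exact ((hF α hα).2 d (mem_support_iff.mpr hd) hne).2

lemma mdeg_of_mem_support {f : MvPolynomial (Fin (n+1)) A} {s : ℕ} (hf : f.IsHomogeneous s)
    {d : Mon n} (hd : d ∈ f.support) : mdeg d = s := by
  have := hf (mem_support_iff.mp hd)
  rw [mdeg_eq_degree, Finsupp.degree_eq_weight_one]
  exact this

lemma part1_aux {J : Set (Mon n)} (hJ : IsStronglyStable J)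
    {F : Mon n → MvPolynomial (Fin (n+1)) A} (hF : IsMarkedSet J F) (s : ℕ) :
    ∀ d : ℕ, ∀ δ α : Mon n, α ∈ minGens J → minGeMax α δ → mdeg α + mdeg δ = s →
      meas s δ ≤ d →
      (monomial (δ + α) (1:A)) ∈ Submodule.span A (FSet J F s) ⊔ nSpanDeg A J s := by
  intro d
  induction d using Nat.strong_induction_on with
  | _ d ih =>
  intro δ α hα hm hdeg hmeas
  have h1 : (F α).coeff α = 1 := (hF α hα).1
  have hexp : monomial δ (1:A) * F α
      = monomial (δ + α) ((F α).coeff α)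
        + ∑ β ∈ (F α).support.erase α, monomial (δ + β) ((F α).coeff β) := by
    rw [monomial_mul_eq_sum]
    by_cases hmem : α ∈ (F α).support
    · exact (Finset.add_sum_erase _ (fun β => monomial (δ + β) ((F α).coeff β)) hmem).symm
    · rw [Finset.erase_eq_of_notMem hmem, notMem_support_iff.mp hmem, map_zero, zero_add]
  have key : (monomial (δ + α) (1:A))
      = monomial δ (1:A) * F α
        - ∑ β ∈ (F α).support.erase α, monomial (δ + β) ((F α).coeff β) := by
    rw [hexp, h1]; ring
  rw [key]
  apply sub_mem
  · apply Submodule.mem_sup_left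
    exact Submodule.subset_span ⟨α, δ, hα, hdeg, hm, rfl⟩
  · apply Submodule.sum_mem
    intro β hβ
    have hβs := Finset.mem_of_mem_erase hβ
    have hβne := Finset.ne_of_mem_erase hβ
    obtain ⟨hβJ, hβdeg⟩ := (hF α hα).2 β hβs hβne
    have hmono : (monomial (δ + β) (1:A)) ∈ Submodule.span A (FSet J F s) ⊔ nSpanDeg A J s := by
      by_cases hin : δ + β ∈ J
      · obtain ⟨α', η, hα', hdec, hmm'⟩ := exists_decomp hJ (δ + β) hin
        have hcomm : δ + β = η + α' := by rw [hdec, add_comm]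
        have hlex : lexLt η δ := lexLt_of_decomp hJ.1 hcomm hmm' (minGens_subset hα') hβJ
        have hdeg2 : mdeg (δ + β) = s := by rw [mdeg_add]; omega
        have hdeg' : mdeg α' + mdeg η = s := by
          rw [hdec, mdeg_add] at hdeg2; omega
        have hb : ∀ j, η j ≤ s := fun j => le_trans (le_mdeg η j) (by omega)
        have hlt : meas s η < meas s δ := meas_lt hlex hb
        have hres := ih (meas s η) (by omega) η α' hα' hmm' hdeg' le_rfl
        rwa [show η + α' = δ + β from hcomm.symm] at hres
      · apply Submodule.mem_sup_right
        apply Submodule.subset_span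
        exact ⟨δ + β, hin, by rw [mdeg_add]; omega, rfl⟩
    have hsm : monomial (δ + β) ((F α).coeff β) = ((F α).coeff β) • monomial (δ + β) (1:A) := by
      rw [smul_monomial, smul_eq_mul, mul_one]
    rw [hsm]
    exact Submodule.smul_mem _ _ hmono

lemma part1 {J : Set (Mon n)} (hJ : IsStronglyStable J)
    {F : Mon n → MvPolynomial (Fin (n+1)) A} (hF : IsMarkedSet J F) (s : ℕ) :
    Submodule.span A (FSet J F s) ⊔ nSpanDeg A J s = homogeneousSubmodule (Fin (n+1)) A s := by
  apply le_antisymm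
  · apply sup_le
    · rw [Submodule.span_le]
      rintro p ⟨α, δ, hα, hdeg, hm, rfl⟩
      rw [SetLike.mem_coe, mem_homogeneousSubmodule]
      have h1 : (monomial δ (1:A)).IsHomogeneous (mdeg δ) :=
        isHomogeneous_monomial _ (mdeg_eq_degree δ).symm
      have h2 := isHomogeneous_markedSet hF hα
      have h3 := h1.mul h2
      rwa [show mdeg δ + mdeg α = s by omega] at h3
    · rw [nSpanDeg, Submodule.span_le]
      rintro p ⟨β, hβ, hdeg, rfl⟩
      rw [SetLike.mem_coe, mem_homogeneousSubmodule]
      exact isHomogeneous_monomial _ (by rw [← mdeg_eq_degree]; exact hdeg)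
  · intro p hp
    rw [mem_homogeneousSubmodule] at hp
    rw [p.as_sum]
    apply Submodule.sum_mem
    intro γ hγ
    have hdeg : mdeg γ = s := mdeg_of_mem_support hp hγ
    have hsm : monomial γ (p.coeff γ) = (p.coeff γ) • monomial γ (1:A) := by
      rw [smul_monomial, smul_eq_mul, mul_one]
    rw [hsm]
    apply Submodule.smul_mem
    by_cases hin : γ ∈ J
    · obtain ⟨α, δ, hα, hdec, hm⟩ := exists_decomp hJ γ hin
      have hdeg' : mdeg α + mdeg δ = s := by rw [hdec, mdeg_add] at hdeg; omega
      have hres := part1_aux hJ hF s (meas s δ) δ α hα hm hdeg' le_rfl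
      rwa [show δ + α = γ by rw [hdec, add_comm]] at hres
    · exact Submodule.mem_sup_right (Submodule.subset_span ⟨γ, hin, hdeg, rfl⟩)

lemma part2 {J : Set (Mon n)} (hJ : IsStronglyStable J)
    {F : Mon n → MvPolynomial (Fin (n+1)) A} (hF : IsMarkedSet J F) (s : ℕ) :
    Submodule.span A (FSet J F s) ⊓ nSpanDeg A J s = ⊥ := by
  rw [eq_bot_iff]
  rintro p ⟨hp1, hp2⟩
  rw [Submodule.mem_bot]
  have hcoeff : ∀ γ ∈ J, p.coeff γ = 0 := by
    intro γ hγ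
    have hle : nSpanDeg A J s ≤ LinearMap.ker (lcoeff A γ) := by
      rw [nSpanDeg, Submodule.span_le]
      rintro q ⟨β, hβ, _, rfl⟩
      rw [SetLike.mem_coe, LinearMap.mem_ker, lcoeff_apply, coeff_monomial,
        if_neg (fun h : β = γ => hβ (h ▸ hγ))]
    exact hle hp2
  obtain ⟨c, hcsupp, hcsum⟩ := Submodule.mem_span_set.mp hp1
  rcases Finset.eq_empty_or_nonempty c.support with hemp | hne
  · rw [← hcsum, Finsupp.sum, hemp, Finset.sum_empty]
  · exfalso
    have hpair : ∀ g : c.support, ∃ αδ : Mon n × Mon n, αδ.1 ∈ minGens J ∧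
        mdeg αδ.1 + mdeg αδ.2 = s ∧ minGeMax αδ.1 αδ.2 ∧
        (g : MvPolynomial (Fin (n+1)) A) = monomial αδ.2 (1:A) * F αδ.1 := by
      rintro ⟨g, hg⟩
      obtain ⟨α, δ, h1, h2, h3, h4⟩ := hcsupp hg
      exact ⟨(α, δ), h1, h2, h3, h4⟩
    choose P hP1 hP2 hP3 hP4 using hpair
    obtain ⟨x, hx⟩ := hne
    obtain ⟨g₀, hg₀mem, hg₀max⟩ := Finset.exists_max_image c.support.attach
      (fun g => meas s (P g).2) ⟨⟨x, hx⟩, Finset.mem_attach _ _⟩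
    set α₀ := (P g₀).1 with hα₀
    set δ₀ := (P g₀).2 with hδ₀
    set γ₀ := δ₀ + α₀ with hγ₀
    have hγ₀J : γ₀ ∈ J := by
      have h := hJ.1 α₀ (minGens_subset (hP1 g₀)) δ₀
      rwa [add_comm] at h
    have hcalc : p.coeff γ₀ = ∑ g ∈ c.support.attach, c ↑g * coeff γ₀ (↑g : MvPolynomial (Fin (n+1)) A) := by
      rw [← hcsum, Finsupp.sum, coeff_sum, ← Finset.sum_attach c.support
        (fun g => coeff γ₀ (c g • g))]
      exact Finset.sum_congr rfl fun g _ => by rw [coeff_smul, smul_eq_mul]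
    have hzero : ∀ b ∈ c.support.attach, b ≠ g₀ →
        c ↑b * coeff γ₀ (↑b : MvPolynomial (Fin (n+1)) A) = 0 := by
      intro b _ hbne
      have hb0 : coeff γ₀ (↑b : MvPolynomial (Fin (n+1)) A) = 0 := by
        rw [hP4 b, coeff_monomial_mul_eq]
        apply Finset.sum_eq_zero
        intro β hβ
        rw [if_neg]
        intro hif
        by_cases hβα : β = (P b).1
        · subst hβα
          obtain ⟨he1, he2⟩ := decomp_unique hJ.1 (hP1 b) (hP1 g₀) hif (hP3 b) (hP3 g₀)
          apply hbne
          apply Subtype.ext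
          rw [hP4 b, hP4 g₀, he2, he1, ← hα₀]
        · have hβJ : β ∉ J := ((hF (P b).1 (hP1 b)).2 β hβ hβα).1
          have hlex : lexLt δ₀ (P b).2 :=
            lexLt_of_decomp hJ.1 hif (hP3 g₀) (minGens_subset (hP1 g₀)) hβJ
          have hb : ∀ j, δ₀ j ≤ s := fun j => le_trans (le_mdeg δ₀ j)
            (by have h := hP2 g₀; rw [← hδ₀, ← hα₀] at h; omega)
          have := meas_lt hlex hb
          have := hg₀max b (Finset.mem_attach _ _)
          omega
      rw [hb0, mul_zero]
    have hone : coeff γ₀ (↑g₀ : MvPolynomial (Fin (n+1)) A) = 1 := by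
      have hcf : coeff γ₀ (↑g₀ : MvPolynomial (Fin (n+1)) A) = (F α₀).coeff α₀ := by
        rw [hP4 g₀, coeff_monomial_mul_eq, ← hα₀, ← hδ₀]
        have hrw : ∀ β ∈ (F α₀).support, (if δ₀ + β = γ₀ then (F α₀).coeff β else 0)
            = if β = α₀ then (F α₀).coeff β else 0 := by
          intro β _
          refine if_congr ⟨fun h => add_left_cancel (hγ₀ ▸ h), fun h => by rw [h, hγ₀]⟩ rfl rfl
        rw [Finset.sum_congr rfl hrw, Finset.sum_ite_eq']
        by_cases hmem : α₀ ∈ (F α₀).support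
        · rw [if_pos hmem]
        · rw [if_neg hmem, notMem_support_iff.mp hmem]
      rw [hcf]
      exact (hF α₀ (hP1 g₀)).1
    have hfinal : p.coeff γ₀ = c ↑g₀ := by
      rw [hcalc, Finset.sum_eq_single g₀ hzero (fun h => absurd hg₀mem h), hone, mul_one]
    have hc0 : c ↑g₀ ≠ 0 := Finsupp.mem_support_iff.mp g₀.2
    rw [hcoeff γ₀ hγ₀J] at hfinal
    exact hc0 hfinal.symm

end Ring2

end MarkedFamilies

end

open MvPolynomial MarkedFamilies in
/-- `A[x]_s = ⟨F_J^{(s)}⟩ ⊕ ⟨N(J)_s⟩` as `A`-modules. -/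
theorem stmt_4 {n : ℕ} {A : Type*} [CommRing A] [IsNoetherianRing A]
    (J : Set (Mon n)) (hJ : IsStronglyStable J)
    (F : Mon n → MvPolynomial (Fin (n + 1)) A) (hF : IsMarkedSet J F) (s : ℕ) :
    Submodule.span A (FSet J F s) ⊔ nSpanDeg A J s
        = homogeneousSubmodule (Fin (n + 1)) A s ∧
    Submodule.span A (FSet J F s) ⊓ nSpanDeg A J s = ⊥ :=
  ⟨MarkedFamilies.part1 hJ hF s, MarkedFamilies.part2 hJ hF s⟩
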